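/- Every set function φ : 2^J → ℝ over a finite set J with φ(∅) = 0 can be written as the difference φ = φ_1 − φ_2 of two infinite-alternating set functions φ_1, φ_2 : 2^J → ℝ. -/

import Mathlib

open Finset

noncomputable def altSum {J : Type*} (φ : Set J → ℝ) (A₀ : Set J) {k : ℕ}
    (A : Fin k → Set J) : ℝ :=
  ∑ K : Finset (Fin k), (-1 : ℝ) ^ K.card * φ (A₀ ∪ ⋃ i ∈ K, A i)

/-- `φ` is infinite-alternating. -/
def InfAlt {J : Type*} (φ : Set J → ℝ) : Prop :=
  φ ∅ = 0 ∧ ∀ (k : ℕ), 1 ≤ k → ∀ (A₀ : Set J) (A : Fin k → Set J),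
    altSum φ A₀ A ≤ 0

section Aux
variable {J : Type*} [Fintype J] [DecidableEq J]

open Classical in
/-- elementary infinite-alternating function: indicator of "meets S". -/
noncomputable def uu (S : Finset J) (A : Set J) : ℝ :=
  if A ∩ ↑S = ∅ then 0 else 1

open Classical in
lemma uu_union (S : Finset J) (A₀ : Set J) {k : ℕ} (A : Fin k → Set J)
    (K : Finset (Fin k)) :
    uu S (A₀ ∪ ⋃ i ∈ K, A i)
      = 1 - (if A₀ ∩ ↑S = ∅ then (1:ℝ) else 0) *
          ∏ i ∈ K, (if A i ∩ ↑S = ∅ then (1:ℝ) else 0) := by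
  unfold uu
  by_cases h : (A₀ ∪ ⋃ i ∈ K, A i) ∩ ↑S = ∅
  · rw [if_pos h]
    have h0 : A₀ ∩ ↑S = ∅ := by
      rw [Set.eq_empty_iff_forall_notMem] at h ⊢
      intro x hx; exact h x ⟨Or.inl hx.1, hx.2⟩
    have hi : ∀ i ∈ K, A i ∩ ↑S = ∅ := by
      intro i hi
      rw [Set.eq_empty_iff_forall_notMem] at h ⊢
      intro x hx
      exact h x ⟨Or.inr (Set.mem_biUnion hi hx.1), hx.2⟩
    rw [if_pos h0, Finset.prod_congr rfl (fun i hiK => if_pos (hi i hiK))]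
    simp
  · rw [if_neg h]
    rw [Set.eq_empty_iff_forall_notMem] at h
    push_neg at h
    obtain ⟨x, hx⟩ := h
    rcases hx.1 with hx0 | hxU
    · rw [if_neg (by rw [Set.eq_empty_iff_forall_notMem]; push_neg; exact ⟨x, hx0, hx.2⟩)]
      ring
    · obtain ⟨i, hiK, hxi⟩ := Set.mem_iUnion₂.1 hxU
      have : ∏ i ∈ K, (if A i ∩ ↑S = ∅ then (1:ℝ) else 0) = 0 := by
        apply Finset.prod_eq_zero hiK
        rw [if_neg (by rw [Set.eq_empty_iff_forall_notMem]; push_neg; exact ⟨x, hxi, hx.2⟩)]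
      rw [this]; ring

open Classical in
lemma altSum_uu (S : Finset J) (A₀ : Set J) {k : ℕ} (hk : 1 ≤ k) (A : Fin k → Set J) :
    altSum (uu S) A₀ A ≤ 0 := by
  unfold altSum
  have hrw : ∀ K : Finset (Fin k), (-1:ℝ) ^ K.card * uu S (A₀ ∪ ⋃ i ∈ K, A i)
      = (-1:ℝ)^K.card - (if A₀ ∩ ↑S = ∅ then (1:ℝ) else 0) *
          ((∏ i ∈ K, (if A i ∩ ↑S = ∅ then (-1:ℝ) else 0)) * ∏ i ∈ (univ \ K), (1:ℝ)) := by
    intro K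
    rw [uu_union]
    have : ∏ i ∈ K, (if A i ∩ ↑S = ∅ then (-1:ℝ) else 0)
        = (-1:ℝ)^K.card * ∏ i ∈ K, (if A i ∩ ↑S = ∅ then (1:ℝ) else 0) := by
      rw [← Finset.prod_const, ← Finset.prod_mul_distrib]
      apply Finset.prod_congr rfl
      intro i _
      by_cases h : A i ∩ ↑S = ∅ <;> simp [h]
    rw [this, Finset.prod_const_one, mul_one]
    ring
  rw [Finset.sum_congr rfl (fun K _ => hrw K)]
  rw [Finset.sum_sub_distrib]
  have h1 : ∑ K : Finset (Fin k), (-1:ℝ)^K.card = 0 := by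
    have h := Finset.prod_add (fun _ : Fin k => (-1:ℝ)) (fun _ => 1) univ
    rw [Finset.powerset_univ] at h
    have h' : ∑ K : Finset (Fin k), (-1:ℝ)^K.card
        = ∑ K : Finset (Fin k), (∏ _i ∈ K, (-1:ℝ)) * ∏ _i ∈ univ \ K, (1:ℝ) := by
      apply Finset.sum_congr rfl
      intro K _
      simp [Finset.prod_const]
    rw [h', ← h]
    have : ∀ _i : Fin k, (-1:ℝ) + 1 = 0 := fun _ => by ring
    rw [Finset.prod_congr rfl (fun i _ => this i), Finset.prod_const, Finset.card_univ]
    simp [Fintype.card_fin]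
    omega
  have h2 : ∑ K : Finset (Fin k),
      (if A₀ ∩ ↑S = ∅ then (1:ℝ) else 0) *
        ((∏ i ∈ K, (if A i ∩ ↑S = ∅ then (-1:ℝ) else 0)) * ∏ i ∈ (univ \ K), (1:ℝ)) ≥ 0 := by
    rw [← Finset.mul_sum]
    have := Finset.prod_add (fun i : Fin k => (if A i ∩ ↑S = ∅ then (-1:ℝ) else 0))
      (fun _ => (1:ℝ)) univ
    rw [Finset.powerset_univ] at this
    rw [← this]
    apply mul_nonneg
    · positivity
    · apply Finset.prod_nonneg
      intro i _
      by_cases h : A i ∩ ↑S = ∅ <;> simp [h]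
  linarith

open Classical in
lemma altSum_comb (c : Finset J → ℝ) (A₀ : Set J) {k : ℕ} (A : Fin k → Set J) :
    altSum (fun X => ∑ S : Finset J, c S * uu S X) A₀ A
      = ∑ S : Finset J, c S * altSum (uu S) A₀ A := by
  unfold altSum
  simp only [Finset.mul_sum]
  rw [Finset.sum_comm]
  apply Finset.sum_congr rfl
  intro S _
  apply Finset.sum_congr rfl
  intro K _
  ring

open Classical in
lemma infAlt_comb (c : Finset J → ℝ) (hc : ∀ S, 0 ≤ c S) :
    InfAlt (fun X => ∑ S : Finset J, c S * uu S X) := by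
  constructor
  · apply Finset.sum_eq_zero
    intro S _
    have : (∅ : Set J) ∩ ↑S = ∅ := Set.empty_inter _
    simp [uu, this]
  · intro k hk A₀ A
    rw [altSum_comb]
    apply Finset.sum_nonpos
    intro S _
    exact mul_nonpos_of_nonneg_of_nonpos (hc S) (altSum_uu S A₀ hk A)

/-- Möbius inversion on finsets. -/
lemma mobius (f : Finset J → ℝ) (T : Finset J) :
    ∑ S ∈ T.powerset, ∑ B ∈ S.powerset, (-1:ℝ)^((S \ B).card) * f B = f T := by
  rw [Finset.sum_comm' (s' := fun B => (T.powerset).filter (fun S => B ⊆ S))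
      (t' := T.powerset) (by
        intro S B
        simp only [Finset.mem_powerset, Finset.mem_filter]
        constructor
        · rintro ⟨hS, hB⟩; exact ⟨⟨hS, hB⟩, hB.trans hS⟩
        · rintro ⟨⟨hS, hB⟩, _⟩; exact ⟨hS, hB⟩)]
  have key : ∀ B ∈ T.powerset,
      ∑ S ∈ (T.powerset).filter (fun S => B ⊆ S), (-1:ℝ)^((S \ B).card) * f B
        = (if B = T then 1 else 0) * f B := by
    intro B hB
    rw [Finset.mem_powerset] at hB
    rw [← Finset.sum_mul]
    congr 1
    have himg : (T.powerset).filter (fun S => B ⊆ S)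
        = (T \ B).powerset.image (fun S' => B ∪ S') := by
      ext S
      simp only [Finset.mem_filter, Finset.mem_powerset, Finset.mem_image]
      constructor
      · rintro ⟨hST, hBS⟩
        exact ⟨S \ B, Finset.sdiff_subset_sdiff hST (le_refl _), by
          rw [Finset.union_sdiff_of_subset hBS]⟩
      · rintro ⟨S', hS', rfl⟩
        refine ⟨Finset.union_subset hB (hS'.trans (Finset.sdiff_subset)), Finset.subset_union_left⟩
    rw [himg, Finset.sum_image (by
      intro x hx y hy hxy
      rw [Finset.mem_coe, Finset.mem_powerset] at hx hy
      have hx' : Disjoint B x := Finset.disjoint_of_subset_right hx Finset.disjoint_sdiff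
      have hy' : Disjoint B y := Finset.disjoint_of_subset_right hy Finset.disjoint_sdiff
      rw [← Finset.union_sdiff_cancel_left hx', (show B ∪ x = B ∪ y from hxy), Finset.union_sdiff_cancel_left hy'])]
    have hcard : ∀ S' ∈ (T \ B).powerset, ((B ∪ S') \ B).card = S'.card := by
      intro S' hS'
      rw [Finset.mem_powerset] at hS'
      congr 1
      rw [Finset.union_sdiff_cancel_left (Finset.disjoint_of_subset_right hS' Finset.disjoint_sdiff)]
    rw [Finset.sum_congr rfl (fun S' hS' => by rw [hcard S' hS'])]
    have := @Finset.sum_powerset_neg_one_pow_card J _ (T \ B)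
    have h2 : ∑ m ∈ (T \ B).powerset, (-1:ℝ)^m.card
        = ((∑ m ∈ (T \ B).powerset, (-1:ℤ)^m.card : ℤ) : ℝ) := by
      push_cast; rfl
    rw [h2, this]
    by_cases h : T \ B = ∅
    · rw [if_pos h, if_pos (by
        have := Finset.sdiff_eq_empty_iff_subset.1 h
        exact le_antisymm hB this)]
      norm_num
    · rw [if_neg h, if_neg (by rintro rfl; exact h (Finset.sdiff_self _))]
      norm_num
  rw [Finset.sum_congr rfl key]
  simp only [ite_mul, one_mul, zero_mul]
  rw [Finset.sum_ite_eq' T.powerset T f]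
  rw [if_pos (Finset.mem_powerset.2 (le_refl _))]

end Aux

section Rep
variable {J : Type*} [Fintype J] [DecidableEq J]

open Classical in
lemma representation (φ : Set J → ℝ) (h0 : φ ∅ = 0) (A : Set J) :
    ∑ S : Finset J,
      (∑ B ∈ S.powerset, (-1:ℝ)^((S \ B).card) * (φ Set.univ - φ ((↑B : Set J)ᶜ))) * uu S A
      = φ A := by
  set f : Finset J → ℝ := fun T => φ Set.univ - φ ((↑T : Set J)ᶜ) with hf
  set a : Finset J → ℝ := fun S => ∑ B ∈ S.powerset, (-1:ℝ)^((S \ B).card) * f B with ha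
  show ∑ S : Finset J, a S * uu S A = φ A
  set T : Finset J := Finset.univ.filter (fun j => j ∉ A) with hT
  have hTc : (↑T : Set J) = Aᶜ := by
    ext j; simp [hT]
  have hsub : ∀ S : Finset J, (A ∩ ↑S = ∅) ↔ S ⊆ T := by
    intro S
    constructor
    · intro h j hj
      rw [hT, Finset.mem_filter]
      refine ⟨Finset.mem_univ _, fun hjA => ?_⟩
      rw [Set.eq_empty_iff_forall_notMem] at h
      exact h j ⟨hjA, hj⟩
    · intro h
      rw [Set.eq_empty_iff_forall_notMem]
      rintro j ⟨hjA, hjS⟩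
      have := h hjS
      rw [hT, Finset.mem_filter] at this
      exact this.2 hjA
  have huu : ∀ S : Finset J, uu S A = 1 - (if S ⊆ T then (1:ℝ) else 0) := by
    intro S
    unfold uu
    by_cases h : A ∩ ↑S = ∅
    · rw [if_pos h, if_pos ((hsub S).1 h)]; ring
    · rw [if_neg h, if_neg (fun hc => h ((hsub S).2 hc))]; ring
  have h1 : ∑ S : Finset J, a S * uu S A
      = (∑ S : Finset J, a S) - ∑ S ∈ T.powerset, a S := by
    rw [Finset.sum_congr rfl (fun S _ => by rw [huu S])]
    have : ∀ S : Finset J, a S * (1 - (if S ⊆ T then (1:ℝ) else 0))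
        = a S - (if S ⊆ T then a S else 0) := by
      intro S; by_cases h : S ⊆ T <;> simp [h]
    rw [Finset.sum_congr rfl (fun S _ => this S), Finset.sum_sub_distrib]
    congr 1
    rw [Finset.sum_ite, Finset.sum_const, smul_zero, add_zero]
    apply Finset.sum_congr
    · ext S; simp [Finset.mem_powerset]
    · intros; rfl
  have hmT : ∑ S ∈ T.powerset, a S = f T := mobius f T
  have hmU : ∑ S : Finset J, a S = f Finset.univ := by
    rw [← Finset.powerset_univ, ← mobius f Finset.univ]
  rw [h1, hmT, hmU, hf]
  simp only [Finset.coe_univ, Set.compl_univ, hTc, compl_compl, h0]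
  try ring

end Rep

theorem stmt11 {J : Type*} [Finite J] (φ : Set J → ℝ) (h0 : φ ∅ = 0) :
    ∃ φ₁ φ₂ : Set J → ℝ, InfAlt φ₁ ∧ InfAlt φ₂ ∧ ∀ X : Set J, φ X = φ₁ X - φ₂ X := by
  have : Fintype J := Fintype.ofFinite J
  classical
  set a : Finset J → ℝ := fun S =>
    ∑ B ∈ S.powerset, (-1:ℝ)^((S \ B).card) * (φ Set.univ - φ ((↑B : Set J)ᶜ)) with ha
  refine ⟨fun X => ∑ S : Finset J, (max (a S) 0) * uu S X,
          fun X => ∑ S : Finset J, (max (-(a S)) 0) * uu S X,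
          infAlt_comb _ (fun S => le_max_right _ _),
          infAlt_comb _ (fun S => le_max_right _ _), ?_⟩
  intro X
  rw [← Finset.sum_sub_distrib]
  have : ∀ S : Finset J, max (a S) 0 * uu S X - max (-(a S)) 0 * uu S X
      = a S * uu S X := by
    intro S
    have : max (a S) 0 - max (-(a S)) 0 = a S := by
      rcases le_total (a S) 0 with h | h
      · rw [max_eq_right h, max_eq_left (by linarith)]; ring
      · rw [max_eq_left h, max_eq_right (by linarith)]; ring
    rw [← sub_mul, this]
  rw [Finset.sum_congr rfl (fun S _ => this S)]
  exact (representation φ h0 X).symm
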